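/- For 0 < α < 1 and all n ≥ 1, Γ(2-α) · Σ_{j=1}^{n} p_{n-j} ≤ n^α / Γ(1+α). -/

import Mathlib

open Real Finset MeasureTheory Set intervalIntegral

/-- Chebyshev's integral inequality on a unit interval, for `f` antitone and `g` monotone. -/
theorem cheb (f g : ℝ → ℝ) (a : ℝ)
    (hf : AntitoneOn f (Set.Ioo a (a+1))) (hg : MonotoneOn g (Set.Ioo a (a+1)))
    (hfi : IntervalIntegrable f volume a (a+1))
    (hgi : IntervalIntegrable g volume a (a+1))
    (hfgi : IntervalIntegrable (fun x => f x * g x) volume a (a+1)) :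
    ∫ x in a..(a+1), f x * g x ≤ (∫ x in a..(a+1), f x) * (∫ x in a..(a+1), g x) := by
  have hab : a ≤ a + 1 := by linarith
  set F : ℝ := ∫ x in a..(a+1), f x with hF
  set G : ℝ := ∫ x in a..(a+1), g x with hG
  -- expansion identity
  have h1 : ∀ K : ℝ, ∫ x in a..(a+1), (f x - F) * (g x - K)
      = (∫ x in a..(a+1), f x * g x) - F * G := by
    intro K
    have e : ∀ x : ℝ, (f x - F) * (g x - K)
        = f x * g x - (K * f x + (F * g x - F * K)) := by intro x; ring
    simp_rw [e]
    rw [intervalIntegral.integral_sub hfgi (((hfi.const_mul K)).add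
      ((hgi.const_mul F).sub (_root_.intervalIntegrable_const))),
      intervalIntegral.integral_add (hfi.const_mul K)
        ((hgi.const_mul F).sub _root_.intervalIntegrable_const),
      intervalIntegral.integral_sub (hgi.const_mul F) _root_.intervalIntegrable_const,
      intervalIntegral.integral_const_mul, intervalIntegral.integral_const_mul,
      intervalIntegral.integral_const]
    simp only [add_sub_cancel_left, smul_eq_mul]
    ring
  -- equality case when f is a.e. constant on the interval
  have heqcase : ((fun x => f x - F) =ᵐ[volume.restrict (Set.Ioo a (a+1))] 0) →
      (∫ x in a..(a+1), f x * g x) = F * G := by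
    intro hae
    have h2 : (fun x => f x * g x) =ᵐ[volume.restrict (Set.Ioo a (a+1))]
        (fun x => F * g x) := by
      filter_upwards [hae] with x hx
      have : f x = F := by simpa [sub_eq_zero] using hx
      simp [this]
    rw [intervalIntegral.integral_of_le hab, MeasureTheory.integral_Ioc_eq_integral_Ioo,
      MeasureTheory.integral_congr_ae h2, MeasureTheory.integral_const_mul]
    rw [hG, intervalIntegral.integral_of_le hab, MeasureTheory.integral_Ioc_eq_integral_Ioo]
  have hintIoo : Integrable (fun x => f x - F) (volume.restrict (Set.Ioo a (a+1))) := by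
    have := (hfi.sub (_root_.intervalIntegrable_const (c := F)))
    rw [intervalIntegrable_iff, uIoc_of_le hab] at this
    exact this.mono_set Set.Ioo_subset_Ioc_self
  have hzero : ∫ x in Set.Ioo a (a+1), (f x - F) = 0 := by
    have : ∫ x in a..(a+1), (f x - F) = 0 := by
      rw [intervalIntegral.integral_sub hfi _root_.intervalIntegrable_const,
        intervalIntegral.integral_const]
      simp [hF]
    rwa [intervalIntegral.integral_of_le hab, MeasureTheory.integral_Ioc_eq_integral_Ioo] at this
  by_cases hT : ∃ v ∈ Set.Ioo a (a+1), f v < F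
  · by_cases hT' : ∃ u ∈ Set.Ioo a (a+1), F < f u
    · -- main case
      obtain ⟨v, hv, hfv⟩ := hT
      obtain ⟨u, hu, hfu⟩ := hT'
      set S : Set ℝ := {x | x ∈ Set.Ioo a (a+1) ∧ f x < F} with hS
      have hSne : S.Nonempty := ⟨v, hv, hfv⟩
      have hbdd : BddBelow S := ⟨a, fun y hy => hy.1.1.le⟩
      set t0 : ℝ := sInf S with ht0
      have hut0 : u ≤ t0 := by
        apply le_csInf hSne
        intro y hy
        by_contra hyu
        push_neg at hyu
        have : f u ≤ f y := hf hy.1 hu hyu.le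
        linarith [hy.2]
      have ht0v : t0 ≤ v := csInf_le hbdd ⟨hv, hfv⟩
      have ht0I : t0 ∈ Set.Ioo a (a+1) := ⟨lt_of_lt_of_le hu.1 hut0, lt_of_le_of_lt ht0v hv.2⟩
      have hpt : ∀ x ∈ Set.Ioo a (a+1), (f x - F) * (g x - g t0) ≤ 0 := by
        intro x hx
        rcases lt_trichotomy x t0 with hlt | heq | hgt
        · have hxS : x ∉ S := fun hxS => absurd (csInf_le hbdd hxS) (not_le.2 hlt)
          have hfx : F ≤ f x := by
            by_contra hc; push_neg at hc; exact hxS ⟨hx, hc⟩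
          have hgx : g x ≤ g t0 := hg hx ht0I hlt.le
          exact mul_nonpos_iff.2 (Or.inl ⟨by linarith, by linarith⟩)
        · simp [heq]
        · obtain ⟨y, hyS, hyx⟩ := exists_lt_of_csInf_lt hSne hgt
          have hfx : f x ≤ f y := hf hyS.1 hx hyx.le
          have hgx : g t0 ≤ g x := hg ht0I hx hgt.le
          exact mul_nonpos_iff.2 (Or.inr ⟨by linarith [hyS.2], by linarith⟩)
      have : ∫ x in a..(a+1), (f x - F) * (g x - g t0) ≤ 0 := by
        rw [intervalIntegral.integral_of_le hab, MeasureTheory.integral_Ioc_eq_integral_Ioo]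
        exact setIntegral_nonpos measurableSet_Ioo hpt
      linarith [h1 (g t0)]
    · -- f ≤ F on the interval
      push_neg at hT'
      have hae : (fun x => f x - F) =ᵐ[volume.restrict (Set.Ioo a (a+1))] 0 := by
        have hnn : 0 ≤ᵐ[volume.restrict (Set.Ioo a (a+1))] (fun x => F - f x) := by
          rw [Filter.EventuallyLE, ae_restrict_iff' measurableSet_Ioo]
          exact Filter.Eventually.of_forall fun x hx => by simpa using hT' x hx
        have hz : ∫ x in Set.Ioo a (a+1), (F - f x) = 0 := by
          have : (fun x => F - f x) = fun x => -(f x - F) := by funext x; ring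
          rw [this, MeasureTheory.integral_neg, hzero, neg_zero]
        have hint2 : Integrable (fun x => F - f x) (volume.restrict (Set.Ioo a (a+1))) := by
          exact hintIoo.neg.congr (Filter.Eventually.of_forall fun x => by simp only [Pi.neg_apply]; ring)
        have := (MeasureTheory.integral_eq_zero_iff_of_nonneg_ae hnn hint2).mp hz
        filter_upwards [this] with x hx
        have hx' : F - f x = 0 := by simpa using hx
        simp only [Pi.zero_apply]
        linarith
      exact le_of_eq (heqcase hae)
  · -- F ≤ f on the interval
    push_neg at hT
    have hnn : 0 ≤ᵐ[volume.restrict (Set.Ioo a (a+1))] (fun x => f x - F) := by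
      rw [Filter.EventuallyLE, ae_restrict_iff' measurableSet_Ioo]
      exact Filter.Eventually.of_forall fun x hx => by simpa using hT x hx
    have hae := (MeasureTheory.integral_eq_zero_iff_of_nonneg_ae hnn hintIoo).mp hzero
    exact le_of_eq (heqcase hae)

theorem fg_integrable {α : ℝ} (hα0 : 0 < α) (hα1 : α < 1) (m i : ℕ) (hm : 2 ≤ m)
    (him : i < m) :
    IntervalIntegrable (fun x => x ^ (-α) * ((m:ℝ) - x) ^ (α - 1)) volume (i:ℝ) ((i:ℝ)+1) := by
  have hfi : IntervalIntegrable (fun x : ℝ => x ^ (-α)) volume (i:ℝ) ((i:ℝ)+1) :=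
    intervalIntegrable_rpow' (by linarith)
  have hgi : IntervalIntegrable (fun x : ℝ => ((m:ℝ) - x) ^ (α - 1)) volume (i:ℝ) ((i:ℝ)+1) := by
    have h := (intervalIntegrable_rpow' (by linarith : (-1:ℝ) < α - 1)
      (a := (m:ℝ) - (i:ℝ)) (b := (m:ℝ) - ((i:ℝ)+1))).comp_sub_left (m:ℝ)
    simpa using h
  rcases Nat.eq_zero_or_pos i with hi0 | hi1
  · subst hi0
    apply hfi.mul_continuousOn
    have huIcc : Set.uIcc ((0:ℕ):ℝ) (((0:ℕ):ℝ)+1) = Set.Icc (0:ℝ) 1 := by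
      norm_num
    rw [huIcc]
    apply ContinuousOn.rpow_const
    · exact (continuous_const.sub continuous_id).continuousOn
    · intro x hx
      left
      have : (2:ℝ) ≤ (m:ℝ) := by exact_mod_cast hm
      have := hx.2
      intro h
      nlinarith [hx.1]
  · apply hgi.continuousOn_mul
    apply ContinuousOn.rpow_const continuousOn_id
    intro x hx
    left
    rw [Set.uIcc_of_le (by linarith : (i:ℝ) ≤ (i:ℝ)+1)] at hx
    have : (1:ℝ) ≤ (i:ℝ) := by exact_mod_cast hi1
    have := hx.1
    intro h; simp only [id_eq] at h; rw [h] at this; linarith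

theorem interval_est {α : ℝ} (hα0 : 0 < α) (hα1 : α < 1) (m i : ℕ) (hm : 2 ≤ m)
    (him : i < m) :
    ∫ x in (i:ℝ)..((i:ℝ)+1), x ^ (-α) * ((m:ℝ) - x) ^ (α - 1) ≤
      ((((i:ℝ)+1) ^ (1-α) - (i:ℝ) ^ (1-α)) / (1-α)) *
        ((((m:ℝ)-(i:ℝ)) ^ α - ((m:ℝ)-(i:ℝ)-1) ^ α) / α) := by
  have hi0 : (0:ℝ) ≤ (i:ℝ) := Nat.cast_nonneg i
  have him' : (i:ℝ) + 1 ≤ (m:ℝ) := by exact_mod_cast Nat.succ_le_of_lt him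
  have hfi : IntervalIntegrable (fun x : ℝ => x ^ (-α)) volume (i:ℝ) ((i:ℝ)+1) :=
    intervalIntegrable_rpow' (by linarith)
  have hgi : IntervalIntegrable (fun x : ℝ => ((m:ℝ) - x) ^ (α - 1)) volume (i:ℝ) ((i:ℝ)+1) := by
    have h := (intervalIntegrable_rpow' (by linarith : (-1:ℝ) < α - 1)
      (a := (m:ℝ) - (i:ℝ)) (b := (m:ℝ) - ((i:ℝ)+1))).comp_sub_left (m:ℝ)
    simpa using h
  have hanti : AntitoneOn (fun x : ℝ => x ^ (-α)) (Set.Ioo (i:ℝ) ((i:ℝ)+1)) := by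
    intro x hx y hy hxy
    exact Real.rpow_le_rpow_of_nonpos (lt_of_le_of_lt hi0 hx.1) hxy (by linarith)
  have hmono : MonotoneOn (fun x : ℝ => ((m:ℝ) - x) ^ (α - 1)) (Set.Ioo (i:ℝ) ((i:ℝ)+1)) := by
    intro x hx y hy hxy
    exact Real.rpow_le_rpow_of_nonpos (by linarith [hy.2]) (by linarith) (by linarith)
  have hch := cheb _ _ _ hanti hmono hfi hgi (fg_integrable hα0 hα1 m i hm him)
  have hfval : ∫ x in (i:ℝ)..((i:ℝ)+1), x ^ (-α)
      = (((i:ℝ)+1) ^ (1-α) - (i:ℝ) ^ (1-α)) / (1-α) := by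
    rw [integral_rpow (Or.inl (by linarith))]
    rw [show -α + 1 = 1 - α by ring]
  have hgval : ∫ x in (i:ℝ)..((i:ℝ)+1), ((m:ℝ) - x) ^ (α - 1)
      = (((m:ℝ)-(i:ℝ)) ^ α - ((m:ℝ)-(i:ℝ)-1) ^ α) / α := by
    rw [intervalIntegral.integral_comp_sub_left (fun y : ℝ => y ^ (α - 1)) (m:ℝ),
      integral_rpow (Or.inl (by linarith))]
    have e1 : α - 1 + 1 = α := by ring
    rw [e1]
    ring_nf
  calc ∫ x in (i:ℝ)..((i:ℝ)+1), x ^ (-α) * ((m:ℝ) - x) ^ (α - 1)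
      ≤ (∫ x in (i:ℝ)..((i:ℝ)+1), x ^ (-α)) *
        (∫ x in (i:ℝ)..((i:ℝ)+1), ((m:ℝ) - x) ^ (α - 1)) := hch
    _ = _ := by rw [hfval, hgval]

theorem beta_val {α : ℝ} (hα0 : 0 < α) (hα1 : α < 1) (m : ℕ) (hm : 1 ≤ m) :
    ∫ x in (0:ℝ)..(m:ℝ), x ^ (-α) * ((m:ℝ) - x) ^ (α - 1)
      = Real.Gamma (1-α) * Real.Gamma α := by
  have h0m : (0:ℝ) < (m:ℝ) := by exact_mod_cast hm
  have key : ((∫ x in (0:ℝ)..(m:ℝ), x ^ (-α) * ((m:ℝ) - x) ^ (α - 1) : ℝ) : ℂ)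
      = ((Real.Gamma (1-α) * Real.Gamma α : ℝ) : ℂ) := by
    rw [← intervalIntegral.integral_ofReal]
    have hcongr : ∫ x in (0:ℝ)..(m:ℝ), ((x ^ (-α) * ((m:ℝ) - x) ^ (α - 1) : ℝ) : ℂ)
        = ∫ x in (0:ℝ)..(m:ℝ), (x:ℂ) ^ ((((1-α):ℝ):ℂ) - 1) * (((m:ℝ):ℂ) - x) ^ (((α:ℝ):ℂ) - 1) := by
      apply intervalIntegral.integral_congr
      intro x hx
      rw [Set.uIcc_of_le h0m.le] at hx
      push_cast
      rw [Complex.ofReal_cpow hx.1, Complex.ofReal_cpow (by linarith [hx.2] : (0:ℝ) ≤ (m:ℝ) - x)]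
      push_cast
      ring_nf
    rw [hcongr]
    have hscaled := Complex.betaIntegral_scaled (((1-α):ℝ):ℂ) ((α:ℝ):ℂ) h0m
    rw [hscaled]
    have hexp : (((1-α):ℝ):ℂ) + ((α:ℝ):ℂ) - 1 = 0 := by push_cast; ring
    rw [hexp, Complex.cpow_zero, one_mul]
    have hGG := Complex.Gamma_mul_Gamma_eq_betaIntegral
      (s := (((1-α):ℝ):ℂ)) (t := ((α:ℝ):ℂ)) (by simpa using by linarith : 0 < Complex.re (((1-α):ℝ):ℂ))
      (by simpa using hα0)
    have hsum : (((1-α):ℝ):ℂ) + ((α:ℝ):ℂ) = 1 := by push_cast; ring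
    rw [hsum, Complex.Gamma_one, one_mul] at hGG
    rw [← hGG, Complex.ofReal_mul, Complex.Gamma_ofReal, Complex.Gamma_ofReal]
  exact_mod_cast key

theorem gamma_prod_le_one {α : ℝ} (hα0 : 0 < α) (hα1 : α < 1) :
    Real.Gamma (1+α) * Real.Gamma (2-α) ≤ 1 := by
  have hc := Real.convexOn_log_Gamma
  have h1 : (1:ℝ) ∈ Set.Ioi (0:ℝ) := by norm_num
  have h2 : (2:ℝ) ∈ Set.Ioi (0:ℝ) := by norm_num
  have e0 : Real.log (Real.Gamma 1) = 0 := by rw [Real.Gamma_one, Real.log_one]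
  have e2 : Real.log (Real.Gamma 2) = 0 := by rw [Real.Gamma_two, Real.log_one]
  have hA : Real.Gamma (1+α) ≤ 1 := by
    have := hc.2 h1 h2 (by linarith : (0:ℝ) ≤ 1 - α) hα0.le (by ring)
    simp only [smul_eq_mul, Function.comp_apply] at this
    rw [show (1-α) * 1 + α * 2 = 1 + α by ring] at this
    rw [e0, e2] at this
    have hlog : Real.log (Real.Gamma (1+α)) ≤ 0 := by linarith
    exact (Real.log_nonpos_iff (Real.Gamma_pos_of_pos (by linarith)).le).mp hlog
  have hB : Real.Gamma (2-α) ≤ 1 := by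
    have := hc.2 h1 h2 hα0.le (by linarith : (0:ℝ) ≤ 1 - α) (by ring)
    simp only [smul_eq_mul, Function.comp_apply] at this
    rw [show α * 1 + (1-α) * 2 = 2 - α by ring] at this
    rw [e0, e2] at this
    have hlog : Real.log (Real.Gamma (2-α)) ≤ 0 := by linarith
    exact (Real.log_nonpos_iff (Real.Gamma_pos_of_pos (by linarith)).le).mp hlog
  have hApos := Real.Gamma_pos_of_pos (show (0:ℝ) < 1 + α by linarith)
  have hBpos := Real.Gamma_pos_of_pos (show (0:ℝ) < 2 - α by linarith)
  nlinarith

theorem key_sum {α : ℝ} (hα0 : 0 < α) (hα1 : α < 1) (m : ℕ) (hm : 1 ≤ m) :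
    Real.Gamma (1+α) * Real.Gamma (2-α) ≤
      ∑ i ∈ Finset.range m, ((((i:ℝ)+1) ^ (1-α) - (i:ℝ) ^ (1-α)) *
        (((m:ℝ)-(i:ℝ)) ^ α - ((m:ℝ)-(i:ℝ)-1) ^ α)) := by
  have hΓ1 : 0 < Real.Gamma α := Real.Gamma_pos_of_pos hα0
  have hΓ2 : 0 < Real.Gamma (1-α) := Real.Gamma_pos_of_pos (by linarith)
  rcases eq_or_lt_of_le hm with hm1 | hm2
  · -- m = 1
    rw [← hm1, Finset.sum_range_one]
    norm_num [Real.zero_rpow (show 1-α ≠ 0 by linarith), Real.zero_rpow hα0.ne']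
    linarith [gamma_prod_le_one hα0 hα1]
  · -- m ≥ 2
    have hm2' : 2 ≤ m := hm2
    have hint : ∀ k < m, IntervalIntegrable
        (fun x => x ^ (-α) * ((m:ℝ) - x) ^ (α - 1)) volume ((k:ℕ):ℝ) (((k+1:ℕ)):ℝ) := by
      intro k hk
      have := fg_integrable hα0 hα1 m k hm2' hk
      simpa using this
    have hsum_int := intervalIntegral.sum_integral_adjacent_intervals
      (a := fun k : ℕ => (k:ℝ)) (n := m)
      (f := fun x => x ^ (-α) * ((m:ℝ) - x) ^ (α - 1)) (μ := volume) hint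
    simp only [Nat.cast_zero] at hsum_int
    have hle : Real.Gamma (1-α) * Real.Gamma α ≤
        ∑ i ∈ Finset.range m, ((((i:ℝ)+1) ^ (1-α) - (i:ℝ) ^ (1-α)) / (1-α)) *
          ((((m:ℝ)-(i:ℝ)) ^ α - ((m:ℝ)-(i:ℝ)-1) ^ α) / α) := by
      rw [← beta_val hα0 hα1 m hm, ← hsum_int]
      apply Finset.sum_le_sum
      intro i hi
      have := interval_est hα0 hα1 m i hm2' (Finset.mem_range.mp hi)
      simpa using this
    have hrw : ∑ i ∈ Finset.range m, ((((i:ℝ)+1) ^ (1-α) - (i:ℝ) ^ (1-α)) / (1-α)) *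
          ((((m:ℝ)-(i:ℝ)) ^ α - ((m:ℝ)-(i:ℝ)-1) ^ α) / α)
        = (∑ i ∈ Finset.range m, ((((i:ℝ)+1) ^ (1-α) - (i:ℝ) ^ (1-α)) *
          (((m:ℝ)-(i:ℝ)) ^ α - ((m:ℝ)-(i:ℝ)-1) ^ α))) / ((1-α) * α) := by
      rw [Finset.sum_div]
      apply Finset.sum_congr rfl
      intro i _
      field_simp
    rw [hrw] at hle
    have hpos : (0:ℝ) < (1-α) * α := by nlinarith
    have hle2 := (le_div_iff₀ hpos).mp hle
    have eA : Real.Gamma (1+α) = α * Real.Gamma α := by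
      rw [add_comm, Real.Gamma_add_one hα0.ne']
    have eB : Real.Gamma (2-α) = (1-α) * Real.Gamma (1-α) := by
      rw [show (2:ℝ)-α = (1-α)+1 by ring, Real.Gamma_add_one (by linarith)]
    rw [eA, eB]
    nlinarith [hle2]

theorem stmt_3 (α : ℝ) (hα0 : 0 < α) (hα1 : α < 1)
    (a : ℕ → ℝ) (ha : ∀ i : ℕ, a i = ((i : ℝ) + 1) ^ (1 - α) - (i : ℝ) ^ (1 - α))
    (p : ℕ → ℝ) (hp0 : p 0 = 1)
    (hp : ∀ n : ℕ, 1 ≤ n → p n = ∑ j ∈ Finset.Icc 1 n, (a (j - 1) - a j) * p (n - j)) :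
    ∀ n : ℕ, 1 ≤ n →
      Real.Gamma (2 - α) * ∑ j ∈ Finset.Icc 1 n, p (n - j)
        ≤ (n : ℝ) ^ α / Real.Gamma (1 + α) := by
  have hΓA : 0 < Real.Gamma (1 + α) := Real.Gamma_pos_of_pos (by linarith)
  have hΓB : 0 < Real.Gamma (2 - α) := Real.Gamma_pos_of_pos (by linarith)
  have ha0 : a 0 = 1 := by rw [ha]; norm_num [Real.zero_rpow (show 1-α ≠ 0 by linarith)]
  -- a is nonincreasing
  have hb : ∀ j : ℕ, 1 ≤ j → 0 ≤ a (j - 1) - a j := by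
    intro j hj
    obtain ⟨k, rfl⟩ : ∃ k, j = k + 1 := ⟨j - 1, by omega⟩
    simp only [Nat.add_sub_cancel]
    rw [ha, ha]
    have hcc := (Real.strictConcaveOn_rpow (by linarith : (0:ℝ) < 1 - α)
      (by linarith : (1:ℝ) - α < 1)).concaveOn
    have hmem1 : (k:ℝ) ∈ Set.Ici (0:ℝ) := Set.mem_Ici.mpr (Nat.cast_nonneg k)
    have hmem2 : ((k:ℝ) + 2) ∈ Set.Ici (0:ℝ) := by
      have := Nat.cast_nonneg (α := ℝ) k; simp; linarith
    have h2 := hcc.2 hmem1 hmem2 (by norm_num : (0:ℝ) ≤ 1/2) (by norm_num : (0:ℝ) ≤ 1/2)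
      (by norm_num)
    simp only [smul_eq_mul] at h2
    rw [show (1/2:ℝ) * (k:ℝ) + 1/2 * ((k:ℝ)+2) = (k:ℝ) + 1 by ring] at h2
    push_cast
    have e : ((k:ℝ)+1+1) ^ (1-α) = ((k:ℝ)+2) ^ (1-α) := by rw [show (k:ℝ)+1+1 = (k:ℝ)+2 by ring]
    linarith [h2, e]
  -- p is nonnegative
  have hpn : ∀ n : ℕ, 0 ≤ p n := by
    intro n
    induction n using Nat.strong_induction_on with
    | _ n ih =>
      rcases Nat.eq_zero_or_pos n with h0 | h1
      · subst h0; rw [hp0]; norm_num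
      · rw [hp n h1]
        apply Finset.sum_nonneg
        intro j hj
        rw [Finset.mem_Icc] at hj
        exact mul_nonneg (hb j hj.1) (ih (n - j) (by omega))
  set Q : ℕ → ℝ := fun n => ∑ k ∈ Finset.range n, p k with hQ
  have hQ1 : Q 1 = 1 := by simp [hQ, hp0]
  -- recursion for partial sums
  have hQrec : ∀ m : ℕ, 1 ≤ m → Q m = 1 + ∑ j ∈ Finset.Icc 1 (m-1), (a (j-1) - a j) * Q (m-j) := by
    intro m hm
    induction m, hm using Nat.le_induction with
    | base => simp [hQ1]
    | succ m hm ih =>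
      obtain ⟨k, rfl⟩ : ∃ k, m = k + 1 := ⟨m - 1, by omega⟩
      simp only [Nat.add_sub_cancel] at ih ⊢
      have hQsucc : Q (k + 1 + 1) = Q (k + 1) + p (k + 1) := by
        simp [hQ, Finset.sum_range_succ]
      have hpk : p (k + 1) = ∑ j ∈ Finset.Icc 1 (k+1), (a (j-1) - a j) * p (k+1-j) :=
        hp (k+1) (by omega)
      rw [hQsucc, ih, hpk]
      rw [Finset.sum_Icc_succ_top (by omega : 1 ≤ k + 1),
        Finset.sum_Icc_succ_top (by omega : 1 ≤ k + 1)]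
      have hmerge : ∑ j ∈ Finset.Icc 1 k, (a (j-1) - a j) * Q (k+1-j)
          + ∑ j ∈ Finset.Icc 1 k, (a (j-1) - a j) * p (k+1-j)
          = ∑ j ∈ Finset.Icc 1 k, (a (j-1) - a j) * Q (k+1+1-j) := by
        rw [← Finset.sum_add_distrib]
        apply Finset.sum_congr rfl
        intro j hj
        rw [Finset.mem_Icc] at hj
        have e1 : k + 1 + 1 - j = (k + 1 - j) + 1 := by omega
        have e2 : Q ((k+1-j) + 1) = Q (k+1-j) + p (k+1-j) := by
          simp [hQ, Finset.sum_range_succ]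
        rw [e1, e2]; ring
      have hQ0 : Q (k+1-(k+1)) = 0 := by simp [hQ]
      have hp0' : p (k+1-(k+1)) = 1 := by simpa using hp0
      rw [hQ0, hp0'] at *
      rw [show k+1+1-(k+1) = 1 by omega, hQ1]
      linarith [hmerge]
  -- Abel summation identity
  have hAbel : ∀ m : ℕ, 1 ≤ m →
      ∑ j ∈ Finset.Icc 1 (m-1), (a (j-1) - a j) * ((m:ℝ)-(j:ℝ)) ^ α
        = (m:ℝ) ^ α - ∑ i ∈ Finset.range m, a i * (((m:ℝ)-(i:ℝ)) ^ α - ((m:ℝ)-(i:ℝ)-1) ^ α) := by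
    intro m hm
    obtain ⟨k, rfl⟩ : ∃ k, m = k + 1 := ⟨m - 1, by omega⟩
    simp only [Nat.add_sub_cancel]
    have hIcc : Finset.Icc 1 k = Finset.Ico 1 (k+1) := (Finset.Ico_add_one_right_eq_Icc 1 k).symm
    rw [hIcc, Finset.sum_Ico_eq_sum_range]
    simp only [Nat.add_sub_cancel]
    have E1 : ∑ i ∈ Finset.range k, (a (1+i-1) - a (1+i)) * (((k+1:ℕ):ℝ)-((1+i:ℕ):ℝ)) ^ α
        = (∑ i ∈ Finset.range k, a i * ((k:ℝ)-(i:ℝ)) ^ α)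
          - ∑ i ∈ Finset.range k, a (i+1) * ((k:ℝ)-(i:ℝ)) ^ α := by
      rw [← Finset.sum_sub_distrib]
      apply Finset.sum_congr rfl
      intro i _
      have e1 : 1 + i - 1 = i := by omega
      have e2 : 1 + i = i + 1 := by omega
      have hc : ((k+1:ℕ):ℝ) - ((i+1:ℕ):ℝ) = (k:ℝ) - (i:ℝ) := by push_cast; ring
      rw [e1, e2, hc]
      ring
    rw [E1]
    have ET : ∑ i ∈ Finset.range (k+1), a i * ((((k+1:ℕ)):ℝ)-(i:ℝ)) ^ α
          - ∑ i ∈ Finset.range (k+1), a i * ((((k+1:ℕ)):ℝ)-(i:ℝ)-1) ^ α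
        = ∑ i ∈ Finset.range (k+1), a i * (((((k+1:ℕ)):ℝ)-(i:ℝ)) ^ α - ((((k+1:ℕ)):ℝ)-(i:ℝ)-1) ^ α) := by
      rw [← Finset.sum_sub_distrib]
      exact Finset.sum_congr rfl fun i _ => by ring
    rw [← ET]
    have E2 : ∑ i ∈ Finset.range (k+1), a i * ((((k+1:ℕ)):ℝ)-(i:ℝ)) ^ α
        = (((k+1:ℕ)):ℝ) ^ α + ∑ i ∈ Finset.range k, a (i+1) * ((k:ℝ)-(i:ℝ)) ^ α := by
      rw [Finset.sum_range_succ']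
      simp only [Nat.cast_zero, sub_zero, ha0, one_mul]
      rw [add_comm]
      congr 1
      apply Finset.sum_congr rfl
      intro i _
      have hc : ((((k+1:ℕ)):ℝ)) - (((i+1:ℕ)):ℝ) = (k:ℝ) - (i:ℝ) := by push_cast; ring
      rw [hc]
    have E3 : ∑ i ∈ Finset.range (k+1), a i * ((((k+1:ℕ)):ℝ)-(i:ℝ)-1) ^ α
        = ∑ i ∈ Finset.range k, a i * ((k:ℝ)-(i:ℝ)) ^ α := by
      rw [Finset.sum_range_succ]
      have hz : ((((k+1:ℕ)):ℝ)) - ((k:ℕ):ℝ) - 1 = 0 := by push_cast; ring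
      rw [hz, Real.zero_rpow hα0.ne', mul_zero, add_zero]
      apply Finset.sum_congr rfl
      intro i _
      have hc : ((((k+1:ℕ)):ℝ)) - ((i:ℕ):ℝ) - 1 = (k:ℝ) - (i:ℝ) := by push_cast; ring
      rw [hc]
    rw [E2, E3]
    ring
  -- main induction
  set P : ℝ := Real.Gamma (1+α) * Real.Gamma (2-α) with hPdef
  have hPpos : 0 < P := mul_pos hΓA hΓB
  set C : ℝ := P⁻¹ with hCdef
  have hCpos : 0 < C := inv_pos.mpr hPpos
  have hkey : ∀ m : ℕ, 1 ≤ m →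
      P ≤ ∑ i ∈ Finset.range m, a i * (((m:ℝ)-(i:ℝ)) ^ α - ((m:ℝ)-(i:ℝ)-1) ^ α) := by
    intro m hm
    have h := key_sum hα0 hα1 m hm
    calc P ≤ ∑ i ∈ Finset.range m, ((((i:ℝ)+1) ^ (1-α) - (i:ℝ) ^ (1-α)) *
        (((m:ℝ)-(i:ℝ)) ^ α - ((m:ℝ)-(i:ℝ)-1) ^ α)) := h
      _ = _ := by
        apply Finset.sum_congr rfl
        intro i _
        rw [ha i]
  have hQle : ∀ n : ℕ, Q n ≤ C * (n:ℝ) ^ α := by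
    intro n
    induction n using Nat.strong_induction_on with
    | _ n ih =>
      rcases Nat.eq_zero_or_pos n with h0 | h1
      · subst h0
        simp [hQ, Real.zero_rpow hα0.ne']
      · rw [hQrec n h1]
        have hstep : ∑ j ∈ Finset.Icc 1 (n-1), (a (j-1) - a j) * Q (n-j)
            ≤ ∑ j ∈ Finset.Icc 1 (n-1), (a (j-1) - a j) * (C * ((n:ℝ)-(j:ℝ)) ^ α) := by
          apply Finset.sum_le_sum
          intro j hj
          rw [Finset.mem_Icc] at hj
          have hle := ih (n-j) (by omega)
          have hcast : ((n-j:ℕ):ℝ) = (n:ℝ) - (j:ℝ) := by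
            rw [Nat.cast_sub (by omega)]
          rw [hcast] at hle
          exact mul_le_mul_of_nonneg_left hle (hb j hj.1)
        have hsum2 : ∑ j ∈ Finset.Icc 1 (n-1), (a (j-1) - a j) * (C * ((n:ℝ)-(j:ℝ)) ^ α)
            = C * ((n:ℝ) ^ α - ∑ i ∈ Finset.range n, a i *
                (((n:ℝ)-(i:ℝ)) ^ α - ((n:ℝ)-(i:ℝ)-1) ^ α)) := by
          rw [← hAbel n h1, Finset.mul_sum]
          apply Finset.sum_congr rfl
          intro j _
          ring
        have hT := hkey n h1
        have hCT : 1 ≤ C * ∑ i ∈ Finset.range n, a i *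
            (((n:ℝ)-(i:ℝ)) ^ α - ((n:ℝ)-(i:ℝ)-1) ^ α) := by
          have h2 : C * P ≤ C * ∑ i ∈ Finset.range n, a i *
              (((n:ℝ)-(i:ℝ)) ^ α - ((n:ℝ)-(i:ℝ)-1) ^ α) :=
            mul_le_mul_of_nonneg_left hT hCpos.le
          rwa [inv_mul_cancel₀ hPpos.ne'] at h2
        calc 1 + ∑ j ∈ Finset.Icc 1 (n-1), (a (j-1) - a j) * Q (n-j)
            ≤ 1 + ∑ j ∈ Finset.Icc 1 (n-1), (a (j-1) - a j) * (C * ((n:ℝ)-(j:ℝ)) ^ α) := by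
              linarith [hstep]
          _ = 1 + C * ((n:ℝ) ^ α - ∑ i ∈ Finset.range n, a i *
                (((n:ℝ)-(i:ℝ)) ^ α - ((n:ℝ)-(i:ℝ)-1) ^ α)) := by rw [hsum2]
          _ ≤ C * (n:ℝ) ^ α := by
              have := hCT
              ring_nf
              ring_nf at this ⊢
              nlinarith [hCT]
  -- conclusion
  intro n hn
  have hreindex : ∑ j ∈ Finset.Icc 1 n, p (n-j) = Q n := by
    have h1 : Finset.Icc 1 n = Finset.Ico 1 (n+1) := (Finset.Ico_add_one_right_eq_Icc 1 n).symm
    rw [h1, Finset.sum_Ico_eq_sum_range]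
    simp only [Nat.add_sub_cancel]
    show ∑ x ∈ Finset.range n, p (n-(1+x)) = ∑ k ∈ Finset.range n, p k
    rw [← Finset.sum_range_reflect p n]
    apply Finset.sum_congr rfl
    intro i _
    congr 1
    omega
  rw [hreindex]
  have h := hQle n
  have hfin : Real.Gamma (2-α) * Q n ≤ Real.Gamma (2-α) * (C * (n:ℝ) ^ α) :=
    mul_le_mul_of_nonneg_left h hΓB.le
  have heq : Real.Gamma (2-α) * (C * (n:ℝ) ^ α) = (n:ℝ) ^ α / Real.Gamma (1+α) := by
    rw [hCdef, hPdef]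
    field_simp
  linarith [hfin, heq.symm.le]
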